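/- Let x < a and b ∈ ℝ. Then ∫_0^∞ (a−x)·t^{−3/2}·φ((a + bt − x)/√t) dt = e^{−(a−x)(b + |b|)}. In particular the inverse Gaussian first-passage-time density is non-defective (total mass 1) when b ≤ 0, and has total mass e^{−2b(a−x)} < 1 when b > 0. -/

import Mathlib

open MeasureTheory

/-- The standard normal density `φ`. -/
noncomputable def stdPhi (z : ℝ) : ℝ := Real.exp (-z ^ 2 / 2) / Real.sqrt (2 * Real.pi)

/-- The (possibly defective) first-passage-time density of Brownian motion started at `x`
through the line `a + b t`. -/
noncomputable def fpt (a x b t : ℝ) : ℝ :=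
  (a - x) * t ^ (-(3:ℝ) / 2) * stdPhi ((a + b * t - x) / Real.sqrt t)

open Filter Real Set Topology


lemma continuous_stdPhi : Continuous stdPhi := by
  unfold stdPhi; fun_prop

lemma stdPhi_nonneg (z : ℝ) : 0 ≤ stdPhi z :=
  div_nonneg (Real.exp_pos _).le (Real.sqrt_nonneg _)

lemma stdPhi_neg (z : ℝ) : stdPhi (-z) = stdPhi z := by simp [stdPhi]

lemma integrable_stdPhi : Integrable stdPhi := by
  have h : Integrable (fun z : ℝ => Real.exp (-(1/2) * z ^ 2)) := integrable_exp_neg_mul_sq (by norm_num)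
  have := h.div_const (Real.sqrt (2 * Real.pi))
  refine this.congr (Filter.Eventually.of_forall fun z => ?_)
  simp only [stdPhi]
  ring_nf

lemma integral_stdPhi : ∫ z, stdPhi z = 1 := by
  have h : ∫ z : ℝ, Real.exp (-(1/2) * z ^ 2) = Real.sqrt (Real.pi / (1/2)) :=
    integral_gaussian (1/2)
  have h2 : (∫ z, stdPhi z) = (∫ z : ℝ, Real.exp (-(1/2) * z ^ 2)) / Real.sqrt (2 * Real.pi) := by
    rw [← integral_div]
    congr 1 with z
    simp only [stdPhi]; ring_nf
  rw [h2, h]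
  rw [div_eq_one_iff_eq (by positivity)]
  congr 1; ring

noncomputable def Phi (z : ℝ) : ℝ := ∫ t in Set.Iic z, stdPhi t

lemma Phi_sub (y z : ℝ) : Phi z - Phi y = ∫ t in y..z, stdPhi t :=
  intervalIntegral.integral_Iic_sub_Iic integrable_stdPhi.integrableOn integrable_stdPhi.integrableOn

lemma hasDerivAt_Phi (z : ℝ) : HasDerivAt Phi (stdPhi z) z := by
  have h : HasDerivAt (fun w => Phi 0 + ∫ t in (0:ℝ)..w, stdPhi t) (stdPhi z) z := by
    refine HasDerivAt.const_add _ ?_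
    exact intervalIntegral.integral_hasDerivAt_right
      (continuous_stdPhi.intervalIntegrable _ _)
      (continuous_stdPhi.stronglyMeasurableAtFilter _ _)
      continuous_stdPhi.continuousAt
  refine h.congr_of_eventuallyEq (Filter.Eventually.of_forall fun w => ?_)
  show Phi w = Phi 0 + ∫ t in (0:ℝ)..w, stdPhi t
  rw [← Phi_sub 0 w]; ring

lemma tendsto_Phi_atTop : Tendsto Phi atTop (𝓝 1) := by
  have h := tendsto_setIntegral_of_monotone (f := stdPhi) (μ := volume)
    (s := fun y : ℝ => Set.Iic y) (fun y => measurableSet_Iic)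
    (fun y z hyz => Set.Iic_subset_Iic.2 hyz) ?_
  · rw [Set.iUnion_Iic] at h
    exact (by simpa [setIntegral_univ, integral_stdPhi] using h :
      Tendsto (fun z => ∫ t in Set.Iic z, stdPhi t) atTop (𝓝 1))
  · rw [Set.iUnion_Iic]
    exact integrable_stdPhi.integrableOn

lemma tendsto_Phi_atBot : Tendsto Phi atBot (𝓝 0) := by
  have h := tendsto_setIntegral_of_antitone (f := stdPhi) (μ := volume)
    (s := fun y : ℝ => Set.Iic (-y)) (fun y => measurableSet_Iic)
    (fun y z hyz => Set.Iic_subset_Iic.2 (by linarith)) ⟨0, integrable_stdPhi.integrableOn⟩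
  have hempty : ⋂ y : ℝ, Set.Iic (-y) = ∅ := by
    ext t; simp only [Set.mem_iInter, Set.mem_Iic, Set.mem_empty_iff_false, iff_false, not_forall]
    exact ⟨-t + 1, by push_neg; linarith⟩
  rw [hempty] at h
  simp only [setIntegral_empty] at h
  have : Tendsto (fun y : ℝ => -y) atBot atTop := tendsto_neg_atBot_atTop
  have h2 := h.comp this
  refine h2.congr fun y => ?_
  simp [Phi]

lemma Phi_zero : Phi 0 = 1/2 := by
  have hsplit : Phi 0 + ∫ t in Set.Ioi (0:ℝ), stdPhi t = 1 := by
    rw [Phi]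
    rw [intervalIntegral.integral_Iic_add_Ioi integrable_stdPhi.integrableOn
      integrable_stdPhi.integrableOn]
    exact integral_stdPhi
  have hsym : Phi 0 = ∫ t in Set.Ioi (0:ℝ), stdPhi t := by
    have h1 : Phi 0 = ∫ t in Set.Iic (0:ℝ), stdPhi (-t) := by
      simp only [Phi, stdPhi_neg]
    rw [h1, integral_comp_neg_Iic]
    norm_num
  linarith


noncomputable def Gfun (b c : ℝ) (s : ℝ) : ℝ :=
  if 0 < s then Phi (-(c + b * s) / Real.sqrt s)
    + Real.exp (-(2 * b * c)) * Phi ((b * s - c) / Real.sqrt s) else 0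

lemma tendsto_sqrt_atTop : Tendsto Real.sqrt atTop atTop := by
  refine (tendsto_rpow_atTop (y := 1/2) (by norm_num)).congr' ?_
  filter_upwards [eventually_ge_atTop (0:ℝ)] with s hs
  exact (Real.sqrt_eq_rpow s).symm

lemma hasDerivAt_Gfun {b c : ℝ} {s : ℝ} (hs : 0 < s) :
    HasDerivAt (Gfun b c) (c * s ^ (-(3:ℝ)/2) * stdPhi ((c + b * s) / Real.sqrt s)) s := by
  have hw : 0 < Real.sqrt s := Real.sqrt_pos.2 hs
  have hw2 : Real.sqrt s ^ 2 = s := Real.sq_sqrt hs.le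
  have hsqrt := Real.hasDerivAt_sqrt hs.ne'
  have hnum1 : HasDerivAt (fun t : ℝ => -(c + b * t)) (-b) s := by
    have h := (((hasDerivAt_id' s).const_mul b).const_add c).neg
    rw [mul_one] at h; exact h
  have hnum2 : HasDerivAt (fun t : ℝ => b * t - c) b s := by
    simpa using ((hasDerivAt_id s).const_mul b).sub_const c
  have hu := hnum1.div hsqrt hw.ne'
  have hv := hnum2.div hsqrt hw.ne'
  have hPu := (hasDerivAt_Phi (-(c + b * s) / Real.sqrt s)).comp s hu
  have hPv := ((hasDerivAt_Phi ((b * s - c) / Real.sqrt s)).comp s hv).const_mul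
    (Real.exp (-(2 * b * c)))
  have H := hPu.add hPv
  have heq : (fun t => Phi (-(c + b * t) / Real.sqrt t)
      + Real.exp (-(2 * b * c)) * Phi ((b * t - c) / Real.sqrt t)) =ᶠ[𝓝 s] Gfun b c := by
    filter_upwards [isOpen_Ioi.mem_nhds hs] with t ht
    simp only [Gfun, if_pos (by exact ht : (0:ℝ) < t)]
  have H2 := (H.congr_of_eventuallyEq heq.symm)
  refine H2.congr_deriv ?_
  symm
  have hK : Real.exp (-(2 * b * c)) * stdPhi ((b * s - c) / Real.sqrt s)
      = stdPhi ((c + b * s) / Real.sqrt s) := by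
    unfold stdPhi
    rw [div_pow, div_pow, hw2, ← mul_div_assoc, ← Real.exp_add]
    congr 1
    field_simp
    ring
  have hP1 : stdPhi (-(c + b * s) / Real.sqrt s) = stdPhi ((c + b * s) / Real.sqrt s) := by
    rw [neg_div, stdPhi_neg]
  rw [hP1]
  have hr : s ^ (-(3:ℝ)/2) = (s * Real.sqrt s)⁻¹ := by
    rw [show (-(3:ℝ)/2) = -(3/2) by norm_num, Real.rpow_neg hs.le]
    congr 1
    rw [show (3:ℝ)/2 = 1 + 1/2 by norm_num, Real.rpow_add hs, Real.rpow_one,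
      ← Real.sqrt_eq_rpow]
  rw [hr, mul_assoc, ← hK]
  set P := stdPhi ((c + b * s) / Real.sqrt s) with hPdef
  set Q := stdPhi ((b * s - c) / Real.sqrt s) with hQdef
  set K := Real.exp (-(2 * b * c)) with hKdef
  -- goal: c * ((s * √s)⁻¹ * (K * Q)) = P * U + K * (Q * V) with P = K * Q
  rw [← hK] at *
  set w := Real.sqrt s with hwdef
  have hsum : (-b * w - -(c + b * s) * (1 / (2 * w))) / w ^ 2
      + (b * w - (b * s - c) * (1 / (2 * w))) / w ^ 2 = c * (s * w)⁻¹ := by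
    rw [← hw2]
    field_simp
    ring
  linear_combination (K * Q) * hsum.symm

lemma Gfun_eq {b c s : ℝ} (hs : 0 < s) : Gfun b c s =
    Phi (-(c / Real.sqrt s) - b * Real.sqrt s)
    + Real.exp (-(2 * b * c)) * Phi (b * Real.sqrt s - c / Real.sqrt s) := by
  simp only [Gfun, if_pos hs]
  congr 2
  · rw [neg_div, add_div, mul_div_assoc, Real.div_sqrt]; ring
  · rw [sub_div, mul_div_assoc, Real.div_sqrt]

lemma tendsto_Gfun_atTop (b c : ℝ) :
    Tendsto (Gfun b c) atTop (𝓝 (Real.exp (-c * (b + |b|)))) := by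
  have h0 : Tendsto (fun s : ℝ => c / Real.sqrt s) atTop (𝓝 0) :=
    Tendsto.div_atTop tendsto_const_nhds _root_.tendsto_sqrt_atTop
  rcases lt_trichotomy b 0 with hb | hb | hb
  · have harg1 : Tendsto (fun s : ℝ => -(c / Real.sqrt s) - b * Real.sqrt s) atTop atTop := by
      have h2 : Tendsto (fun s : ℝ => -(b * Real.sqrt s)) atTop atTop :=
        (_root_.tendsto_sqrt_atTop.const_mul_atTop (by linarith : (0:ℝ) < -b)).congr fun s => by ring
      simpa [sub_eq_add_neg] using h2.atTop_add h0.neg |>.congr fun s => by ring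
    have harg2 : Tendsto (fun s : ℝ => b * Real.sqrt s - c / Real.sqrt s) atTop atBot := by
      have h3 : Tendsto (fun s : ℝ => b * Real.sqrt s) atTop atBot := by
        refine (tendsto_neg_atTop_atBot.comp
          (_root_.tendsto_sqrt_atTop.const_mul_atTop (by linarith : (0:ℝ) < -b))).congr fun s => by
            simp
      simpa [sub_eq_add_neg] using h3.atBot_add h0.neg
    have hT : Tendsto (Gfun b c) atTop
        (𝓝 (1 + Real.exp (-(2 * b * c)) * 0)) := by
      refine (((tendsto_Phi_atTop.comp harg1).add
        ((tendsto_Phi_atBot.comp harg2).const_mul _))).congr' ?_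
      filter_upwards [eventually_gt_atTop (0:ℝ)] with s hs using (Gfun_eq hs).symm
    have : Real.exp (-c * (b + |b|)) = 1 + Real.exp (-(2 * b * c)) * 0 := by
      rw [abs_of_neg hb]; simp
    rw [this]; exact hT
  · subst hb
    have harg : Tendsto (fun s : ℝ => -(c / Real.sqrt s) - 0 * Real.sqrt s) atTop (𝓝 0) := by
      simpa using h0.neg
    have hT : Tendsto (Gfun 0 c) atTop (𝓝 (Phi 0 + Real.exp (-(2 * 0 * c)) * Phi 0)) := by
      refine ((((hasDerivAt_Phi 0).continuousAt.tendsto.comp harg).add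
        (((hasDerivAt_Phi 0).continuousAt.tendsto.comp harg).const_mul _))).congr' ?_
      filter_upwards [eventually_gt_atTop (0:ℝ)] with s hs
      rw [Gfun_eq hs]
      simp
    have : Real.exp (-c * ((0:ℝ) + |(0:ℝ)|)) = Phi 0 + Real.exp (-(2 * 0 * c)) * Phi 0 := by
      rw [Phi_zero]; norm_num
    rw [this]; exact hT
  · have harg1 : Tendsto (fun s : ℝ => -(c / Real.sqrt s) - b * Real.sqrt s) atTop atBot := by
      have h3 : Tendsto (fun s : ℝ => -(b * Real.sqrt s)) atTop atBot :=
        (tendsto_neg_atTop_atBot.comp (_root_.tendsto_sqrt_atTop.const_mul_atTop hb))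
      simpa [sub_eq_add_neg] using h0.neg.add_atBot h3
    have harg2 : Tendsto (fun s : ℝ => b * Real.sqrt s - c / Real.sqrt s) atTop atTop := by
      simpa [sub_eq_add_neg] using
        (_root_.tendsto_sqrt_atTop.const_mul_atTop hb).atTop_add h0.neg
    have hT : Tendsto (Gfun b c) atTop
        (𝓝 (0 + Real.exp (-(2 * b * c)) * 1)) := by
      refine (((tendsto_Phi_atBot.comp harg1).add
        ((tendsto_Phi_atTop.comp harg2).const_mul _))).congr' ?_
      filter_upwards [eventually_gt_atTop (0:ℝ)] with s hs using (Gfun_eq hs).symm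
    have : Real.exp (-c * (b + |b|)) = 0 + Real.exp (-(2 * b * c)) * 1 := by
      rw [abs_of_pos hb]; ring_nf
    rw [this]; exact hT

lemma contWithin_Gfun {b c : ℝ} (hc : 0 < c) :
    ContinuousWithinAt (Gfun b c) (Set.Ici 0) 0 := by
  have h0 : Gfun b c 0 = 0 := by simp [Gfun]
  have hsq0 : Tendsto Real.sqrt (𝓝[>] (0:ℝ)) (𝓝[>] 0) := by
    refine tendsto_nhdsWithin_of_tendsto_nhds_of_eventually_within _ ?_ ?_
    · simpa using (Real.continuous_sqrt.tendsto 0).mono_left nhdsWithin_le_nhds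
    · filter_upwards [self_mem_nhdsWithin] with s hs
      exact Real.sqrt_pos.2 hs
  have hinv : Tendsto (fun s : ℝ => c / Real.sqrt s) (𝓝[>] (0:ℝ)) atTop := by
    refine (Tendsto.const_mul_atTop hc (tendsto_inv_nhdsGT_zero.comp hsq0)).congr fun s => ?_
    rw [div_eq_mul_inv]; rfl
  have hb0 : Tendsto (fun s : ℝ => b * Real.sqrt s) (𝓝[>] (0:ℝ)) (𝓝 0) := by
    have h := ((Real.continuous_sqrt.tendsto 0).const_mul b).mono_left
      (nhdsWithin_le_nhds (s := Set.Ioi (0:ℝ)))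
    simpa using h
  have harg1 : Tendsto (fun s : ℝ => -(c / Real.sqrt s) - b * Real.sqrt s) (𝓝[>] (0:ℝ)) atBot := by
    simpa [sub_eq_add_neg] using (tendsto_neg_atTop_atBot.comp hinv).atBot_add hb0.neg
  have harg2 : Tendsto (fun s : ℝ => b * Real.sqrt s - c / Real.sqrt s) (𝓝[>] (0:ℝ)) atBot := by
    simpa [sub_eq_add_neg] using hb0.add_atBot (tendsto_neg_atTop_atBot.comp hinv)
  have hT : Tendsto (Gfun b c) (𝓝[>] (0:ℝ)) (𝓝 (0 + Real.exp (-(2 * b * c)) * 0)) := by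
    refine (((tendsto_Phi_atBot.comp harg1).add
      ((tendsto_Phi_atBot.comp harg2).const_mul _))).congr' ?_
    filter_upwards [self_mem_nhdsWithin] with s hs using (Gfun_eq hs).symm
  rw [ContinuousWithinAt, h0, ← Set.Ioi_insert, nhdsWithin_insert, Filter.tendsto_sup]
  exact ⟨by simpa [h0] using tendsto_pure_nhds (Gfun b c) 0, by simpa using hT⟩

lemma fpt_integral (a x b : ℝ) (hx : x < a) :
    (∫ t in Set.Ioi (0:ℝ), fpt a x b t) = Real.exp (-(a - x) * (b + |b|)) := by
  have hc : 0 < a - x := by linarith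
  have hderiv : ∀ s ∈ Set.Ioi (0:ℝ), HasDerivAt (Gfun b (a - x)) (fpt a x b s) s := by
    intro s hs
    have h := hasDerivAt_Gfun (b := b) (c := a - x) hs
    convert h using 1
    unfold fpt
    rw [show a + b * s - x = (a - x) + b * s from by ring]
  have hnn : ∀ s ∈ Set.Ioi (0:ℝ), 0 ≤ fpt a x b s := by
    intro s hs
    exact mul_nonneg (mul_nonneg hc.le (Real.rpow_nonneg (le_of_lt hs) _)) (stdPhi_nonneg _)
  have key := integral_Ioi_of_hasDerivAt_of_nonneg (contWithin_Gfun (b := b) hc)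
    hderiv hnn (tendsto_Gfun_atTop b (a - x))
  rw [key]
  simp [Gfun]


/-- for `x < a`, `∫_0^∞ (a-x) t^{-3/2} φ((a+bt-x)/√t) dt = e^{-(a-x)(b+|b|)}`;
non-defective for `b ≤ 0`, total mass `e^{-2b(a-x)} < 1` for `b > 0`. -/
theorem stmt_9 (a x b : ℝ) (hx : x < a) :
    (∫ t in Set.Ioi (0:ℝ), fpt a x b t) = Real.exp (-(a - x) * (b + |b|)) ∧
    (b ≤ 0 → (∫ t in Set.Ioi (0:ℝ), fpt a x b t) = 1) ∧
    (0 < b → (∫ t in Set.Ioi (0:ℝ), fpt a x b t) = Real.exp (-2 * b * (a - x)) ∧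
      Real.exp (-2 * b * (a - x)) < 1) := by
  have hmain := fpt_integral a x b hx
  refine ⟨hmain, ?_, ?_⟩
  · intro hb
    rw [hmain, abs_of_nonpos hb]
    simp
  · intro hb
    have hc : 0 < a - x := by linarith
    constructor
    · rw [hmain, abs_of_pos hb]
      congr 1; ring
    · rw [← Real.exp_zero]
      exact Real.exp_lt_exp.2 (by nlinarith)
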